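/- If G1 and G2 are finite graphs each containing a Hamiltonian cycle, then the strong product G1 × G2 (where ((v1,w1),(v2,w2)) is an edge iff (v1=v2 and (w1,w2) ∈ E2) or ((v1,v2) ∈ E1 and w1=w2) or ((v1,v2) ∈ E1 and (w1,w2) ∈ E2)) contains a Hamiltonian cycle. -/

import Mathlib

open SimpleGraph

/-- The strong product of two simple graphs. -/
def strongProd {V W : Type*} (G : SimpleGraph V) (H : SimpleGraph W) :
    SimpleGraph (V × W) where
  Adj a b := (a.1 = b.1 ∧ H.Adj a.2 b.2) ∨ (G.Adj a.1 b.1 ∧ a.2 = b.2) ∨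
    (G.Adj a.1 b.1 ∧ H.Adj a.2 b.2)
  symm := by
    constructor
    rintro ⟨a₁, a₂⟩ ⟨b₁, b₂⟩ (⟨h₁, h₂⟩ | ⟨h₁, h₂⟩ | ⟨h₁, h₂⟩)
    · exact Or.inl ⟨h₁.symm, h₂.symm⟩
    · exact Or.inr (Or.inl ⟨h₁.symm, h₂.symm⟩)
    · exact Or.inr (Or.inr ⟨h₁.symm, h₂.symm⟩)
  loopless := by
    constructor
    rintro ⟨a₁, a₂⟩ (⟨_, h⟩ | ⟨h, _⟩ | ⟨h, _⟩)
    · exact H.ne_of_adj h rfl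
    · exact G.ne_of_adj h rfl
    · exact G.ne_of_adj h rfl

open SimpleGraph List

section helpers
variable {α : Type*} {G : SimpleGraph α}

/-- Build a walk from a chain of adjacencies. -/
def walkOfChain (G : SimpleGraph α) : ∀ (l : List α) {a b : α},
    List.Chain G.Adj a (l ++ [b]) → G.Walk a b
  | [], a, b, h => Walk.cons (List.chain_cons.mp h).1 Walk.nil
  | c :: l, a, b, h =>
    Walk.cons (List.chain_cons.mp h).1 (walkOfChain G l (List.chain_cons.mp h).2)

lemma support_walkOfChain : ∀ (l : List α) {a b : α} (h : List.Chain G.Adj a (l ++ [b])),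
    (walkOfChain G l h).support = a :: l ++ [b]
  | [], a, b, h => rfl
  | c :: l, a, b, h => by
    simp [walkOfChain, support_walkOfChain l (List.chain_cons.mp h).2]

lemma length_walkOfChain (l : List α) {a b : α} (h : List.Chain G.Adj a (l ++ [b])) :
    (walkOfChain G l h).length = l.length + 1 := by
  have := congrArg List.length (support_walkOfChain l h)
  rw [Walk.length_support] at this
  simpa using this

lemma not_mem_edges_of_path {a b : α} (q : G.Walk b a) (hn : q.support.Nodup)
    (hl : 2 ≤ q.length) : s(a, b) ∉ q.edges := by
  intro hmem
  cases q with
  | nil => simp at hmem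
  | cons h q' =>
    rename_i x
    rw [Walk.edges_cons, List.mem_cons] at hmem
    rw [Walk.support_cons, List.nodup_cons] at hn
    rcases hmem with heq | hmem
    · rw [Sym2.eq_iff] at heq
      rcases heq with ⟨rfl, rfl⟩ | ⟨rfl, -⟩
      · exact hn.1 (q'.end_mem_support)
      · have : q'.IsPath := Walk.IsPath.mk' hn.2
        rw [Walk.isPath_iff_eq_nil] at this
        subst this
        simp at hl
    · exact hn.1 (q'.snd_mem_support_of_mem_edges hmem)

/-- A cyclically-chained nodup list covering all vertices gives a Hamiltonian cycle. -/
lemma hamCycle_of_list (l : List α) (hn : l.Nodup) (hmem : ∀ x, x ∈ l)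
    (hc : List.Chain' G.Adj l)
    (hwrap : ∀ x ∈ l.getLast?, ∀ y ∈ l.head?, G.Adj x y)
    (hlen : 3 ≤ l.length) [DecidableEq α] :
    ∃ (a : α) (p : G.Walk a a), p.IsHamiltonianCycle := by
  match l, hlen with
  | a :: c :: t, hlen =>
  have ht : t ≠ [] := by rintro rfl; simp at hlen
  -- chain `a :: c :: t ++ [a]`
  have hch : List.Chain G.Adj a ((c :: t) ++ [a]) := by
    have : List.Chain' G.Adj ((a :: c :: t) ++ [a]) := by
      refine List.IsChain.append hc (List.isChain_singleton a) ?_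
      intro x hx y hy
      simp only [List.head?_cons, Option.mem_some_iff] at hy
      subst hy
      exact hwrap x hx a (by simp)
    exact this
  refine ⟨a, walkOfChain G (c :: t) hch, ?_⟩
  have hq : List.Chain G.Adj c (t ++ [a]) := (List.chain_cons.mp hch).2
  have hps : (walkOfChain G t hq).support = c :: t ++ [a] := support_walkOfChain t hq
  have hnod : (c :: t ++ [a]).Nodup := by
    have : ((a :: c :: t) : List α).Nodup := hn
    rw [show (a :: c :: t : List α) = [a] ++ (c :: t) from rfl, List.nodup_append_comm] at this
    simpa using this
  rw [Walk.isHamiltonianCycle_iff_isCycle_and_support_count_tail_eq_one]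
  constructor
  · show (Walk.cons (List.chain_cons.mp hch).1 (walkOfChain G t hq)).IsCycle
    rw [Walk.cons_isCycle_iff]
    constructor
    · exact Walk.IsPath.mk' (hps ▸ hnod)
    · refine not_mem_edges_of_path _ (hps ▸ hnod) ?_
      rw [length_walkOfChain]
      have : 1 ≤ t.length := by
        cases t with
        | nil => exact absurd rfl ht
        | cons _ _ => simp
      omega
  · intro x
    have hsupp : (walkOfChain G (c :: t) hch).support = a :: (c :: t ++ [a]) := by
      simpa using support_walkOfChain (c :: t) hch
    rw [hsupp]
    simp only [List.tail_cons]
    have hperm : ((c :: t) ++ [a]) ~ (a :: c :: t) := List.perm_append_comm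
    rw [List.Perm.count_eq (by simpa using hperm)]
    exact List.count_eq_one_of_mem hn (hmem x)

end helpers


section prodlist
variable {α : Type*} {β : Type*}

lemma product_head? (l₁ : List α) (l₂ : List β) (h1 : l₁ ≠ []) (h2 : l₂ ≠ []) :
    (l₁ ×ˢ l₂).head? = some (l₁.head h1, l₂.head h2) := by
  cases l₁ with
  | nil => exact absurd rfl h1
  | cons a t =>
    rw [List.product_cons, List.head?_append_of_ne_nil _ (by simpa using h2),
      List.head?_map, List.head?_eq_head h2]
    rfl

lemma product_getLast? (l₁ : List α) (l₂ : List β) (h1 : l₁ ≠ []) (h2 : l₂ ≠ []) :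
    (l₁ ×ˢ l₂).getLast? = some (l₁.getLast h1, l₂.getLast h2) := by
  induction l₁ with
  | nil => exact absurd rfl h1
  | cons a t ih =>
    cases t with
    | nil =>
      rw [List.product_cons]
      simp only [List.nil_product, List.append_nil, List.getLast?_map,
        List.getLast?_eq_getLast h2]
      rfl
    | cons b t' =>
      rw [List.product_cons, List.getLast?_append, ih (by simp)]
      simp [List.getLast_cons]

end prodlist

section extract
variable {α : Type*} {G : SimpleGraph α} [DecidableEq α]

lemma list_of_hamCycle {v : α} (c : G.Walk v v) (hc : c.IsHamiltonianCycle) :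
    ∃ l : List α, l.Nodup ∧ (∀ x, x ∈ l) ∧ List.Chain' G.Adj l ∧
      (∀ x ∈ l.getLast?, ∀ y ∈ l.head?, G.Adj x y) ∧ 3 ≤ l.length := by
  refine ⟨c.support.tail, ?_, ?_, ?_, ?_, ?_⟩
  · refine List.nodup_iff_count_le_one.mpr fun x => ?_
    rw [← Walk.support_tail_of_not_nil c hc.isCycle.not_nil]
    exact le_of_eq (hc.isHamiltonian_tail x)
  · intro x
    rw [← List.count_pos_iff, ← Walk.support_tail_of_not_nil c hc.isCycle.not_nil,
      hc.isHamiltonian_tail x]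
    norm_num
  · exact (c.isChain_adj_support).tail
  · have hlen : 3 ≤ c.length := hc.isCycle.three_le_length
    have hsupp : c.support = v :: c.support.tail := c.support_eq_cons
    have htail_len : c.support.tail.length = c.length := by
      have := c.length_support
      have := c.support.length_tail
      omega
    match hts : c.support.tail, (htail_len ▸ hlen : 3 ≤ c.support.tail.length) with
    | x :: t, _ =>
      intro p hp q hq
      -- getLast? = some v
      have hgl : (x :: t).getLast? = some v := by
        have h1 : c.support.getLast c.support_ne_nil = v := c.getLast_support
        have h2 : c.support.getLast? = some v := by
          rw [List.getLast?_eq_getLast c.support_ne_nil, h1]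
        rw [hsupp, hts] at h2
        rwa [List.getLast?_cons_cons] at h2
      rw [hgl, Option.mem_some_iff] at hp
      simp only [List.head?_cons, Option.mem_some_iff] at hq
      subst hp hq
      have := c.isChain_adj_support
      rw [hsupp, hts, List.isChain_cons_cons] at this
      exact this.1
  · have := c.length_support
    have := c.support.length_tail
    have hlen : 3 ≤ c.length := hc.isCycle.three_le_length
    omega

end extract
lemma prod_cyclic_list {V W : Type*} (G : SimpleGraph V) (H : SimpleGraph W)
    (lV : List V) (lW : List W)
    (hnV : lV.Nodup) (hmV : ∀ x, x ∈ lV) (hcV : List.Chain' G.Adj lV)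
    (hwV : ∀ x ∈ lV.getLast?, ∀ y ∈ lV.head?, G.Adj x y) (hlV : 3 ≤ lV.length)
    (hnW : lW.Nodup) (hmW : ∀ x, x ∈ lW) (hcW : List.Chain' H.Adj lW)
    (hwW : ∀ x ∈ lW.getLast?, ∀ y ∈ lW.head?, H.Adj x y) (hlW : 3 ≤ lW.length) :
    ∃ L : List (V × W), L.Nodup ∧ (∀ x, x ∈ L) ∧
      List.Chain' (strongProd G H).Adj L ∧
      (∀ x ∈ L.getLast?, ∀ y ∈ L.head?, (strongProd G H).Adj x y) ∧ 3 ≤ L.length := by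
  have hV0 : lV ≠ [] := by rintro rfl; simp at hlV
  have hW0 : lW ≠ [] := by rintro rfl; simp at hlW
  have hdl0 : lW.dropLast ≠ [] := by
    have := lW.length_dropLast
    intro h
    rw [h] at this
    simp at this
    omega
  set r : List W := lW.getLast hW0 :: lW.dropLast with hr
  have hrperm : r ~ lW := by
    calc r = [lW.getLast hW0] ++ lW.dropLast := rfl
      _ ~ lW.dropLast ++ [lW.getLast hW0] := List.perm_append_comm
      _ = lW := List.dropLast_append_getLast hW0
  have hr0 : r ≠ [] := by simp [hr]
  -- decompose the chain of lW along dropLast ++ [getLast]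
  have hcW' : List.Chain' H.Adj (lW.dropLast ++ [lW.getLast hW0]) := by
    rwa [List.dropLast_append_getLast hW0]
  replace hcW' := List.isChain_append.mp hcW'
  obtain ⟨hc_dl, -, hlast_edge⟩ := hcW'
  -- H.Adj (dropLast.getLast) (lW.getLast)
  have hedge : H.Adj (lW.dropLast.getLast hdl0) (lW.getLast hW0) := by
    refine hlast_edge _ ?_ _ ?_
    · rw [List.getLast?_eq_getLast hdl0]; rfl
    · simp
  -- chain' r
  have hcr : List.Chain' H.Adj r := by
    refine List.isChain_cons.mpr ⟨?_, hc_dl⟩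
    intro y hy
    rw [List.head?_eq_head hdl0, Option.mem_some_iff] at hy
    subst hy
    rw [List.head_dropLast]
    exact hwW _ (by rw [List.getLast?_eq_getLast hW0]; rfl) _ (by simp [List.head?_eq_head hW0, List.head_dropLast])
  -- wrap adjacency of r
  have hrwrap : H.Adj (r.getLast hr0) (r.head hr0) := by
    have h1 : r.getLast hr0 = lW.dropLast.getLast hdl0 := List.getLast_cons hdl0
    rw [h1]
    exact hedge
  refine ⟨lV ×ˢ r, ?_, ?_, ?_, ?_, ?_⟩
  · exact hnV.product (hrperm.nodup_iff.mpr hnW)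
  · rintro ⟨x, y⟩
    rw [List.mem_product]
    exact ⟨hmV x, hrperm.mem_iff.mpr (hmW y)⟩
  · show List.IsChain _ (lV.flatMap fun a => r.map fun b => (a, b))
    rw [List.flatMap_def, List.isChain_flatten]
    · constructor
      · intro bl hbl
        obtain ⟨a, -, rfl⟩ := List.mem_map.mp hbl
        rw [List.isChain_map]
        exact hcr.imp fun _ _ h => Or.inl ⟨rfl, h⟩
      · rw [List.isChain_map]
        refine hcV.imp fun a b hab => ?_
        intro x hx y hy
        rw [List.getLast?_map, List.getLast?_eq_getLast hr0] at hx
        rw [List.head?_map, List.head?_eq_head hr0] at hy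
        simp only [Option.map_some, Option.mem_some_iff] at hx hy
        subst hx hy
        exact Or.inr (Or.inr ⟨hab, hrwrap⟩)
    · intro h
      obtain ⟨a, -, ha⟩ := List.mem_map.mp h
      exact hr0 (List.map_eq_nil_iff.mp ha)
  · intro x hx y hy
    rw [product_getLast? lV r hV0 hr0, Option.mem_some_iff] at hx
    rw [product_head? lV r hV0 hr0, Option.mem_some_iff] at hy
    subst hx hy
    refine Or.inr (Or.inr ⟨?_, hrwrap⟩)
    exact hwV _ (by simp [List.getLast?_eq_getLast hV0]) _ (by simp [List.head?_eq_head hV0])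
  · rw [List.length_product, hrperm.length_eq]
    calc 3 ≤ 3 * 3 := by norm_num
      _ ≤ lV.length * lW.length := Nat.mul_le_mul hlV hlW

/-- If two finite graphs each contain a Hamiltonian cycle, then their strong product
contains a Hamiltonian cycle. -/
theorem strongProd_hamiltonian {V W : Type*} [Fintype V] [Fintype W] [DecidableEq V] [DecidableEq W]
    (G : SimpleGraph V) (H : SimpleGraph W)
    (hG : ∃ (v : V) (c : G.Walk v v), c.IsHamiltonianCycle)
    (hH : ∃ (w : W) (c : H.Walk w w), c.IsHamiltonianCycle) :
    ∃ (x : V × W) (c : (strongProd G H).Walk x x), c.IsHamiltonianCycle := by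
  obtain ⟨v, cG, hcG⟩ := hG
  obtain ⟨w, cH, hcH⟩ := hH
  obtain ⟨lV, hnV, hmV, hcV, hwV, hlV⟩ := list_of_hamCycle cG hcG
  obtain ⟨lW, hnW, hmW, hcW, hwW, hlW⟩ := list_of_hamCycle cH hcH
  obtain ⟨L, hnL, hmL, hcL, hwL, hlL⟩ :=
    prod_cyclic_list G H lV lW hnV hmV hcV hwV hlV hnW hmW hcW hwW hlW
  exact hamCycle_of_list L hnL hmL hcL hwL hlL
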